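/- arXiv:1202.2340 — 4 statements merged into one kernel-verified Lean document; each statement's English description precedes it below -/
import Mathlib

section
/- If u₁, u₂, u₃ are involutions of ℙ¹(ℂ) each of which swaps two fixed distinct points y and z (so each uᵢ maps y to z and z to y), then the product u₃u₂u₁ is an involution. -/
open Projectivization

noncomputable section

/-- The complex projective line `ℙ¹(ℂ)`. -/
abbrev ProjLine : Type := Projectivization ℂ (Fin 2 → ℂ)

/-- The permutation of `ℙ¹(ℂ)` induced by a linear automorphism of `ℂ²`. -/
def projPerm (e : (Fin 2 → ℂ) ≃ₗ[ℂ] (Fin 2 → ℂ)) : Equiv.Perm ProjLine where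
  toFun := Projectivization.map e.toLinearMap e.injective
  invFun := Projectivization.map e.symm.toLinearMap e.symm.injective
  left_inv := fun p => by
    induction p using Projectivization.ind with
    | h v hv => simp [Projectivization.map_mk]
  right_inv := fun p => by
    induction p using Projectivization.ind with
    | h v hv => simp [Projectivization.map_mk]

/-- The action of `GL(2,ℂ)` on `ℙ¹(ℂ)` by Möbius (projective) transformations,
as a group homomorphism to the permutation group of `ℙ¹(ℂ)`. -/
def mobius : GL (Fin 2) ℂ →* Equiv.Perm ProjLine where
  toFun g := projPerm ((LinearMap.GeneralLinearGroup.generalLinearEquiv ℂ (Fin 2 → ℂ))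
      (Matrix.GeneralLinearGroup.toLin g))
  map_one' := by
    ext p
    induction p using Projectivization.ind with
    | h v hv => simp [projPerm, Projectivization.map_mk]
  map_mul' g h := by
    ext p
    induction p using Projectivization.ind with
    | h v hv =>
      simp [projPerm, Projectivization.map_mk]

/-- `PGL(2,ℂ)`, realized faithfully as the group of Möbius transformations of `ℙ¹(ℂ)`. -/
def PGL2 : Subgroup (Equiv.Perm ProjLine) := mobius.range

end

lemma projPerm_swap (e : (Fin 2 → ℂ) ≃ₗ[ℂ] (Fin 2 → ℂ)) (y z : ProjLine) (hyz : y ≠ z)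
    (h1 : projPerm e y = z) (h2 : projPerm e z = y) (p : ProjLine) :
    projPerm e (projPerm e p) = p := by
  induction y using Projectivization.ind with
  | h v hv =>
  induction z using Projectivization.ind with
  | h w hw =>
  have hev : e v ≠ 0 := fun h => hv (by simpa using e.injective (by simp [h]))
  have hew : e w ≠ 0 := fun h => hw (by simpa using e.injective (by simp [h]))
  have h1' : Projectivization.mk ℂ (e v) hev = Projectivization.mk ℂ w hw := by
    simpa [projPerm, Projectivization.map_mk] using h1
  have h2' : Projectivization.mk ℂ (e w) hew = Projectivization.mk ℂ v hv := by
    simpa [projPerm, Projectivization.map_mk] using h2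
  obtain ⟨a, ha⟩ := (mk_eq_mk_iff ℂ _ _ _ _).1 h1'
  obtain ⟨b, hb⟩ := (mk_eq_mk_iff ℂ _ _ _ _).1 h2'
  -- e v = a • w, e w = b • v
  have hli : LinearIndependent ℂ ![v, w] := by
    rw [linearIndependent_fin2]
    refine ⟨by simpa using hw, fun c hc => ?_⟩
    simp only [Matrix.cons_val_one, Matrix.head_cons, Matrix.cons_val_zero] at hc
    rcases eq_or_ne c 0 with rfl | hc0
    · exact hv (by simpa using hc.symm)
    · exact hyz ((mk_eq_mk_iff' ℂ _ _ hv hw).2 ⟨c, hc⟩)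
  have hbasis : ∀ u : Fin 2 → ℂ, ∃ s t : ℂ, u = s • v + t • w := by
    intro u
    have hspan : Submodule.span ℂ (Set.range ![v, w]) = ⊤ := by
      apply LinearIndependent.span_eq_top_of_card_eq_finrank hli
      simp
    have : u ∈ Submodule.span ℂ (Set.range ![v, w]) := hspan ▸ Submodule.mem_top
    rw [show Set.range ![v, w] = {v, w} by
      simp [Matrix.range_cons, Matrix.range_empty, Set.pair_comm]] at this
    rw [Submodule.mem_span_pair] at this
    obtain ⟨s, t, hst⟩ := this
    exact ⟨s, t, hst.symm⟩
  induction p using Projectivization.ind with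
  | h u hu =>
  obtain ⟨s, t, rfl⟩ := hbasis u
  have key : e (e (s • v + t • w)) = ((a : ℂ) * b) • (s • v + t • w) := by
    have h1 : e v = (a : ℂ) • w := ha.symm
    have h2 : e w = (b : ℂ) • v := hb.symm
    simp only [map_add, map_smul, h1, h2]
    module
  have habu : ((a : ℂ) * b) • (s • v + t • w) ≠ 0 := by
    simp only [ne_eq, smul_eq_zero, not_or]
    exact ⟨by simp [a.ne_zero, b.ne_zero], hu⟩
  show Projectivization.map e.toLinearMap e.injective
      (Projectivization.map e.toLinearMap e.injective (Projectivization.mk ℂ _ hu)) = _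
  rw [Projectivization.map_mk, Projectivization.map_mk]
  exact (mk_eq_mk_iff' ℂ _ _ _ hu).2 ⟨(a:ℂ)*b, key.symm⟩

/-- If `u₁, u₂, u₃` are involutions of `ℙ¹(ℂ)` each swapping two fixed distinct points
`y` and `z`, then the product `u₃u₂u₁` is an involution. -/
theorem pgl2_three_swapping_involutions (u₁ u₂ u₃ : PGL2) (y z : ProjLine) (hyz : y ≠ z)
    (h1 : u₁ ≠ 1) (h1sq : u₁ ^ 2 = 1) (h2 : u₂ ≠ 1) (h2sq : u₂ ^ 2 = 1)
    (h3 : u₃ ≠ 1) (h3sq : u₃ ^ 2 = 1)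
    (h1y : (↑u₁ : Equiv.Perm ProjLine) y = z) (h1z : (↑u₁ : Equiv.Perm ProjLine) z = y)
    (h2y : (↑u₂ : Equiv.Perm ProjLine) y = z) (h2z : (↑u₂ : Equiv.Perm ProjLine) z = y)
    (h3y : (↑u₃ : Equiv.Perm ProjLine) y = z) (h3z : (↑u₃ : Equiv.Perm ProjLine) z = y) :
    u₃ * u₂ * u₁ ≠ 1 ∧ (u₃ * u₂ * u₁) ^ 2 = 1 := by
  set w := u₃ * u₂ * u₁ with hw
  have hwy : (↑w : Equiv.Perm ProjLine) y = z := by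
    simp [hw, Equiv.Perm.mul_apply, h1y, h2z, h3y]
  have hwz : (↑w : Equiv.Perm ProjLine) z = y := by
    simp [hw, Equiv.Perm.mul_apply, h1z, h2y, h3z]
  constructor
  · intro h
    rw [h] at hwy
    exact hyz (by simpa using hwy)
  · obtain ⟨M, hM⟩ := w.2
    have hM' : (↑w : Equiv.Perm ProjLine) =
        projPerm ((LinearMap.GeneralLinearGroup.generalLinearEquiv ℂ (Fin 2 → ℂ))
          (Matrix.GeneralLinearGroup.toLin M)) := hM.symm
    ext1
    push_cast
    rw [sq]
    ext p
    rw [Equiv.Perm.mul_apply, hM']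
    exact projPerm_swap _ y z hyz (hM' ▸ hwy) (hM' ▸ hwz) p
end

section
/- Let u₁, …, u_n be involutions of ℙ¹(ℂ) and v = u_n⋯u₁ their product. Suppose there exist two distinct points x₁, x₂ of ℙ¹(ℂ) with v(x₁) = x₂ and v(x₂) = x₁. Then v² = 1, and consequently for every point p of ℙ¹(ℂ), applying the sequence of involutions u₁, u₂, …, u_n, u₁, …, u_n returns to p (the 2n-step polygon closes from every starting point). -/
open Projectivization

lemma mobius_apply_mk (g : GL (Fin 2) ℂ) (w : Fin 2 → ℂ) (hw : w ≠ 0) :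
    (mobius g) (Projectivization.mk ℂ w hw) =
      Projectivization.mk ℂ
        ((LinearMap.GeneralLinearGroup.generalLinearEquiv ℂ (Fin 2 → ℂ))
          (Matrix.GeneralLinearGroup.toLin g) w)
        ((LinearEquiv.map_ne_zero_iff
          ((LinearMap.GeneralLinearGroup.generalLinearEquiv ℂ (Fin 2 → ℂ))
            (Matrix.GeneralLinearGroup.toLin g))).mpr hw) := by
  rfl

/-- Poncelet-type porism: let `u₁, …, uₙ` be involutions of `ℙ¹(ℂ)` and
`v = uₙ ⋯ u₁` their product.  If `v` swaps two distinct points `x₁ ≠ x₂`, then `v² = 1`;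
consequently the `2n`-step polygon closes from every starting point `p`. -/
theorem pgl2_poncelet_porism (n : ℕ) (u : Fin n → PGL2)
    (hinv : ∀ i, u i ≠ 1 ∧ (u i) ^ 2 = 1)
    (v : PGL2) (hv : v = (List.ofFn u).reverse.prod)
    (x₁ x₂ : ProjLine) (hx : x₁ ≠ x₂)
    (h₁ : (↑v : Equiv.Perm ProjLine) x₁ = x₂)
    (h₂ : (↑v : Equiv.Perm ProjLine) x₂ = x₁) :
    v ^ 2 = 1 ∧ ∀ p : ProjLine,
      (↑v : Equiv.Perm ProjLine) ((↑v : Equiv.Perm ProjLine) p) = p := by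
  obtain ⟨g, hg⟩ := v.2
  set e : (Fin 2 → ℂ) ≃ₗ[ℂ] (Fin 2 → ℂ) :=
    (LinearMap.GeneralLinearGroup.generalLinearEquiv ℂ (Fin 2 → ℂ))
      (Matrix.GeneralLinearGroup.toLin g) with he
  -- representatives
  obtain ⟨w₁, hw₁, rfl⟩ : ∃ w h, Projectivization.mk ℂ w h = x₁ :=
    ⟨x₁.rep, x₁.rep_nonzero, x₁.mk_rep⟩
  obtain ⟨w₂, hw₂, rfl⟩ : ∃ w h, Projectivization.mk ℂ w h = x₂ :=
    ⟨x₂.rep, x₂.rep_nonzero, x₂.mk_rep⟩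
  rw [← hg, mobius_apply_mk, Projectivization.mk_eq_mk_iff] at h₁ h₂
  obtain ⟨c, hc⟩ := h₁
  obtain ⟨d, hd⟩ := h₂
  rw [← he] at hc hd
  rw [Units.smul_def] at hc hd
  -- linear independence
  have hli : LinearIndependent ℂ ![w₁, w₂] := by
    rw [linearIndependent_fin2]
    refine ⟨by simpa using hw₂, fun a ha => hx ?_⟩
    simp only [Matrix.cons_val_one, Matrix.head_cons, Matrix.cons_val_zero] at ha
    exact ((Projectivization.mk_eq_mk_iff' ℂ w₁ w₂ hw₁ hw₂).mpr ⟨a, ha⟩)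
  have hcard : Fintype.card (Fin 2) = Module.finrank ℂ (Fin 2 → ℂ) := by
    simp [Module.finrank_fintype_fun_eq_card]
  let B := basisOfLinearIndependentOfCardEqFinrank hli hcard
  have hB : ⇑B = ![w₁, w₂] := coe_basisOfLinearIndependentOfCardEqFinrank hli hcard
  -- e² = (c*d) • id
  have key : (e.toLinearMap ∘ₗ e.toLinearMap) = ((c : ℂ) * d) • LinearMap.id := by
    apply B.ext
    intro i
    fin_cases i <;>
      simp only [hB, LinearMap.coe_comp, Function.comp_apply, LinearEquiv.coe_coe,
        LinearMap.smul_apply, LinearMap.id_coe, id_eq]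
    · show e (e w₁) = ((c : ℂ) * d) • w₁
      rw [← hc, map_smul, ← hd, smul_smul]
    · show e (e w₂) = ((c : ℂ) * d) • w₂
      rw [← hd, map_smul, ← hc, smul_smul, mul_comm]
  have key' : ∀ w : Fin 2 → ℂ, e (e w) = ((c : ℂ) * d) • w := fun w => by
    have := LinearMap.congr_fun key w
    simpa using this
  have hall : ∀ p : ProjLine,
      (↑v : Equiv.Perm ProjLine) ((↑v : Equiv.Perm ProjLine) p) = p := by
    intro p
    induction p using Projectivization.ind with
    | h w hw =>
      rw [← hg, mobius_apply_mk, mobius_apply_mk]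
      rw [Projectivization.mk_eq_mk_iff']
      exact ⟨(c : ℂ) * d, (key' w).symm⟩
  refine ⟨?_, hall⟩
  have : ((v ^ 2 : PGL2) : Equiv.Perm ProjLine) = ((1 : PGL2) : Equiv.Perm ProjLine) := by
    push_cast [pow_two]
    ext p
    simpa using hall p
  exact Subtype.coe_injective this
end

section
/- With P_n defined by P₀ = 1, P₁ = x, P_n = xP_{n−1} − P_{n−2}, and M_u = [[0,1],[1,0]], M_v = [[1,0],[x,−1]] over ℂ, for a fixed x ∈ ℂ the matrix (M_u M_v)^n is a scalar multiple of the identity matrix if and only if P_{n−1}(x) = 0. -/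
/-- The Fibonacci-like sequence `P₀ = 1`, `P₁ = x`, `Pₙ = x·Pₙ₋₁ − Pₙ₋₂` evaluated
at `x : ℂ`. -/
def Pfib (x : ℂ) : ℕ → ℂ
  | 0 => 1
  | 1 => x
  | (n + 2) => x * Pfib x (n + 1) - Pfib x n

/-- `PfibShift x n = P_{n-1}(x)`, with the convention `P_{−1} = 0`. -/
def PfibShift (x : ℂ) : ℕ → ℂ
  | 0 => 0
  | (n + 1) => Pfib x n

lemma pfib_rec (x : ℂ) (n : ℕ) : x * Pfib x n - PfibShift x n = Pfib x (n + 1) := by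
  cases n with
  | zero => simp [Pfib, PfibShift]
  | succ m => simp [Pfib, PfibShift]

lemma pow_closed (x : ℂ) (n : ℕ) :
    ((!![0, 1; 1, 0] : Matrix (Fin 2) (Fin 2) ℂ) *
        (!![1, 0; x, -1] : Matrix (Fin 2) (Fin 2) ℂ)) ^ (n + 1) =
      !![Pfib x (n + 1), -Pfib x n; Pfib x n, -PfibShift x n] := by
  induction n with
  | zero =>
    simp [Pfib, PfibShift, Matrix.mul_fin_two]
  | succ m ih =>
    rw [pow_succ, ih]
    have h1 : (!![0, 1; 1, 0] : Matrix (Fin 2) (Fin 2) ℂ) * !![1, 0; x, -1]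
        = !![x, -1; 1, 0] := by
      simp [Matrix.mul_fin_two]
    rw [h1, Matrix.mul_fin_two]
    have eA : Pfib x (m + 1) * x + -Pfib x m * 1 = Pfib x (m + 1 + 1) := by
      rw [← pfib_rec x (m + 1)]; simp only [PfibShift]; ring
    have eB : Pfib x (m + 1) * -1 + -Pfib x m * 0 = -Pfib x (m + 1) := by ring
    have eC : Pfib x m * x + -PfibShift x m * 1 = Pfib x (m + 1) := by
      rw [← pfib_rec x m]; ring
    have eD : Pfib x m * -1 + -PfibShift x m * 0 = -PfibShift x (m + 1) := by
      simp only [PfibShift]; ring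
    rw [eA, eB, eC, eD]

/-- For a fixed `x ∈ ℂ`, with `M_u = [[0,1],[1,0]]` and `M_v = [[1,0],[x,−1]]`, the
matrix `(M_u M_v)^n` is a scalar multiple of the identity iff `P_{n−1}(x) = 0`. -/
theorem mul_pow_scalar_iff (x : ℂ) (n : ℕ) (hn : 1 ≤ n) :
    (∃ c : ℂ, ((!![0, 1; 1, 0] : Matrix (Fin 2) (Fin 2) ℂ) *
        (!![1, 0; x, -1] : Matrix (Fin 2) (Fin 2) ℂ)) ^ n =
        c • (1 : Matrix (Fin 2) (Fin 2) ℂ)) ↔ PfibShift x n = 0 := by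
  obtain ⟨m, rfl⟩ : ∃ m, n = m + 1 := ⟨n - 1, (Nat.succ_pred_eq_of_pos hn).symm⟩
  rw [pow_closed]
  constructor
  · rintro ⟨c, hc⟩
    have := congrArg (fun M => M 1 0) hc
    simpa [PfibShift, Matrix.one_apply] using this
  · intro h
    have hPm : Pfib x m = 0 := h
    refine ⟨Pfib x (m + 1), ?_⟩
    have hdiag : Pfib x (m + 1) = -PfibShift x m := by
      cases m with
      | zero => simp [Pfib] at hPm
      | succ k =>
        have : Pfib x (k + 2) = x * Pfib x (k + 1) - Pfib x k := rfl
        rw [this, hPm]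
        simp [PfibShift]
    ext i j
    fin_cases i <;> fin_cases j <;>
      simp [hPm, hdiag, Matrix.one_apply]
end

section
/- Let u, v be the involutions of ℙ¹(ℂ) with fixed points {1, −1} and {0, 2/x} respectively (x ∈ ℂ, x ≠ 0). Then (uv)^n = 1 in PGL(2,ℂ) if and only if P_{n−1}(x) = 0, where P₀ = 1, P₁ = x, P_n = xP_{n−1} − P_{n−2}. -/
open Projectivization

section Aux

lemma Pfib_succ (x : ℂ) (n : ℕ) :
    Pfib x (n + 1) = x * Pfib x n - PfibShift x n := by
  cases n with
  | zero => simp [Pfib, PfibShift]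
  | succ m => rfl

lemma matrix_pow (x : ℂ) (n : ℕ) :
    (!![x, -1; 1, 0] : Matrix (Fin 2) (Fin 2) ℂ) ^ n =
      !![Pfib x n, -PfibShift x n; PfibShift x n, Pfib x n - x * PfibShift x n] := by
  induction n with
  | zero => simp [Pfib, PfibShift, Matrix.one_fin_two]
  | succ m ih =>
    rw [pow_succ, ih, Matrix.mul_fin_two]
    have h1 : Pfib x (m + 1) = x * Pfib x m - PfibShift x m := Pfib_succ x m
    have h2 : PfibShift x (m + 1) = Pfib x m := rfl
    rw [h1, h2]
    congr 1 <;> ring_nf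

lemma mobius_apply (g : GL (Fin 2) ℂ) (w : Fin 2 → ℂ) (hw : w ≠ 0)
    (hw' : (g : Matrix (Fin 2) (Fin 2) ℂ).mulVec w ≠ 0) :
    mobius g (Projectivization.mk ℂ w hw) =
      Projectivization.mk ℂ ((g : Matrix (Fin 2) (Fin 2) ℂ).mulVec w) hw' := by
  simp [mobius, projPerm, Projectivization.map_mk]

lemma mulVec_ne_zero (g : GL (Fin 2) ℂ) (w : Fin 2 → ℂ) (hw : w ≠ 0) :
    (g : Matrix (Fin 2) (Fin 2) ℂ).mulVec w ≠ 0 := by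
  intro h
  apply hw
  have := congrArg ((g⁻¹ : GL (Fin 2) ℂ) : Matrix (Fin 2) (Fin 2) ℂ).mulVec h
  rwa [Matrix.mulVec_mulVec, ← Matrix.GeneralLinearGroup.coe_mul, inv_mul_cancel,
    Matrix.GeneralLinearGroup.coe_one, Matrix.one_mulVec, Matrix.mulVec_zero] at this

lemma mobius_eq_one_of_scalar (g : GL (Fin 2) ℂ) (c : ℂ) (hc : c ≠ 0)
    (hg : (g : Matrix (Fin 2) (Fin 2) ℂ) = c • 1) : mobius g = 1 := by
  ext p
  induction p using Projectivization.ind with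
  | h w hw =>
    have hne := mulVec_ne_zero g w hw
    rw [Equiv.Perm.coe_one, id_eq, mobius_apply g w hw hne]
    rw [Projectivization.mk_eq_mk_iff]
    refine ⟨Units.mk0 c hc, ?_⟩
    rw [hg] at hne ⊢
    simp [Matrix.smul_mulVec]

lemma mobius_fixed_exists (g : GL (Fin 2) ℂ) (w : Fin 2 → ℂ) (hw : w ≠ 0)
    (h : mobius g (Projectivization.mk ℂ w hw) = Projectivization.mk ℂ w hw) :
    ∃ a : ℂ, a • w = (g : Matrix (Fin 2) (Fin 2) ℂ).mulVec w := by
  rw [mobius_apply g w hw (mulVec_ne_zero g w hw)] at h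
  rwa [Projectivization.mk_eq_mk_iff'] at h

end Aux

/-- Poncelet criterion for two lines: with `u` the Möbius transformation of matrix
`[[0,1],[1,0]]` (fixing `1` and `−1`) and `v` the one of matrix `[[1,0],[x,−1]]`
(fixing `0` and `2/x`), `(uv)^n = 1` in `PGL(2,ℂ)` iff `P_{n−1}(x) = 0`. -/

theorem pgl2_two_lines_poncelet (x : ℂ) (hx : x ≠ 0) (n : ℕ) (hn : 1 ≤ n)
    (u v : GL (Fin 2) ℂ)
    (hu : (u : Matrix (Fin 2) (Fin 2) ℂ) = !![0, 1; 1, 0])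
    (hv : (v : Matrix (Fin 2) (Fin 2) ℂ) = !![1, 0; x, -1]) :
    (mobius u * mobius v) ^ n = 1 ↔ PfibShift x n = 0 := by
  have huv : ((u * v : GL (Fin 2) ℂ) : Matrix (Fin 2) (Fin 2) ℂ) = !![x, -1; 1, 0] := by
    rw [Matrix.GeneralLinearGroup.coe_mul, hu, hv, Matrix.mul_fin_two]
    norm_num
  have hpow : (((u * v) ^ n : GL (Fin 2) ℂ) : Matrix (Fin 2) (Fin 2) ℂ) =
      !![Pfib x n, -PfibShift x n; PfibShift x n, Pfib x n - x * PfibShift x n] := by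
    rw [Units.val_pow_eq_pow_val, huv, matrix_pow]
  have hmain : (mobius u * mobius v) ^ n = mobius ((u * v) ^ n) := by
    rw [map_pow, map_mul]
  rw [hmain]
  constructor
  · intro h
    have hpt : mobius ((u * v) ^ n) (Projectivization.mk ℂ ![0, 1] (by
        intro hz; have := congrFun hz 1; simp at this)) =
        Projectivization.mk ℂ ![0, 1] (by intro hz; have := congrFun hz 1; simp at this) := by
      rw [h]; rfl
    have hmv : (((u * v) ^ n : GL (Fin 2) ℂ) : Matrix (Fin 2) (Fin 2) ℂ).mulVec ![0, 1] =
        ![-PfibShift x n, Pfib x n - x * PfibShift x n] := by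
      rw [hpow]
      funext i; fin_cases i <;> simp [Matrix.mulVec, dotProduct, Fin.sum_univ_two]
    obtain ⟨a, ha⟩ := mobius_fixed_exists _ _ _ hpt
    rw [hmv] at ha
    have := congrFun ha 0
    simp at this
    exact this
  · intro h
    -- the matrix is Pfib x n • 1, and Pfib x n ≠ 0 since det = 1
    have hdet : (Pfib x n) * (Pfib x n) = 1 := by
      have hd : ((((u * v) ^ n : GL (Fin 2) ℂ) : Matrix (Fin 2) (Fin 2) ℂ)).det = 1 := by
        rw [Units.val_pow_eq_pow_val, Matrix.det_pow, huv, Matrix.det_fin_two_of]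
        simp
      rw [hpow, Matrix.det_fin_two_of, h] at hd
      ring_nf at hd ⊢
      linear_combination hd
    have hc : Pfib x n ≠ 0 := by
      intro h0; rw [h0] at hdet; simp at hdet
    apply mobius_eq_one_of_scalar _ (Pfib x n) hc
    rw [hpow, h]
    funext i j; fin_cases i <;> fin_cases j <;> simp [Matrix.one_fin_two]
end
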